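/- Let I be a One-In-Three Positive 3-SAT instance with variables x₁,…,x_n and clauses C₁,…,C_m, each clause containing exactly three positive literals. Construct the HRRC instance I' as follows. For each variable x_i: a resident y'_i with preference list (x'_i) and a hospital x'_i of capacity 1 with preference list (y'_i). For each clause C_j: residents g'_{j,1} with list (g'_{j,2}, g'_{j,4}) and g'_{j,3} with list (g'_{j,4}, g'_{j,2}); hospitals of capacity 1, g'_{j,2} with list (g'_{j,3}, g'_{j,1}) and g'_{j,4} with list (g'_{j,1}, g'_{j,3}). For each clause C_j = {x_{i_{j,1}} ∨ x_{i_{j,2}} ∨ x_{i_{j,3}}}, every 2-element subset E of {g'_{j,2}, g'_{j,4}, x'_{i_{j,1}}, x'_{i_{j,2}}, x'_{i_{j,3}}} is a region with regional cap c(E) = 1. Then I' admits a strongly stable matching if and only if I has a truth assignment under which every clause contains exactly one true literal. -/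

import Mathlib

/-- `a` is strictly preferred to `b` in the strictly ordered preference list `l`
(most preferred first). -/
def ListPref {α : Type*} [DecidableEq α] (l : List α) (a b : α) : Prop :=
  b ∈ l ∧ l.idxOf a < l.idxOf b

/-- An instance of the Hospitals/Residents problem with Regional Caps (HRRC):
residents `R`, hospitals `H`, strict preference lists on both sides,
hospital capacities `q`, a family `regions` of regions with regional caps `cap`. -/
structure HRRC (R H : Type*) where
  prefR : R → List H
  prefH : H → List R
  q : H → ℕ
  regions : Set (Finset H)
  cap : Finset H → ℕ

namespace HRRC

variable {R H : Type*} [DecidableEq R] [DecidableEq H]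

/-- Well-formedness: preference lists are strict (no repetitions), acceptability is
mutual, and regions are nonempty. -/
def WellFormed (I : HRRC R H) : Prop :=
  (∀ r, (I.prefR r).Nodup) ∧ (∀ h, (I.prefH h).Nodup) ∧
  (∀ r h, h ∈ I.prefR r ↔ r ∈ I.prefH h) ∧
  (∀ E ∈ I.regions, E.Nonempty)

/-- `M(h)`: the set of residents assigned to hospital `h`. -/
def assignedTo (M : Finset (R × H)) (h : H) : Finset R :=
  (M.filter fun p => p.2 = h).image Prod.fst

/-- `M(E)`: the set of residents assigned to some hospital in the region `E`. -/
def assignedIn (M : Finset (R × H)) (E : Finset H) : Finset R :=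
  (M.filter fun p => p.2 ∈ E).image Prod.fst

/-- `M` is a matching: pairs are mutually acceptable, each resident has at most one
hospital, and no hospital exceeds its capacity. -/
def IsMatching (I : HRRC R H) (M : Finset (R × H)) : Prop :=
  (∀ p ∈ M, p.2 ∈ I.prefR p.1 ∧ p.1 ∈ I.prefH p.2) ∧
  (∀ r h h', (r, h) ∈ M → (r, h') ∈ M → h = h') ∧
  (∀ h, (assignedTo M h).card ≤ I.q h)

/-- Feasibility: all regional caps are respected. -/
def FeasibleCaps (I : HRRC R H) (M : Finset (R × H)) : Prop :=
  ∀ E ∈ I.regions, (assignedIn M E).card ≤ I.cap E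

/-- `M \ {(r, M(r))} ∪ {(r, h)}`. -/
def move (M : Finset (R × H)) (r : R) (h : H) : Finset (R × H) :=
  (M.filter fun p => p.1 ≠ r) ∪ {(r, h)}

/-- `(r, h)` is a blocking pair for `M`. -/
def IsBlockingPair (I : HRRC R H) (M : Finset (R × H)) (r : R) (h : H) : Prop :=
  (r, h) ∉ M ∧ (h ∈ I.prefR r ∧ r ∈ I.prefH h) ∧
  ((∀ h', (r, h') ∉ M) ∨ ∃ h', (r, h') ∈ M ∧ ListPref (I.prefR r) h h') ∧
  ((assignedTo M h).card < I.q h ∨ ∃ r' ∈ assignedTo M h, ListPref (I.prefH h) r r')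

/-- `(r, h)` is a strong blocking pair for `M`. -/
def IsSBP (I : HRRC R H) (M : Finset (R × H)) (r : R) (h : H) : Prop :=
  I.IsBlockingPair M r h ∧
  (I.FeasibleCaps (move M r h) ∨ ∃ r' ∈ assignedTo M h, ListPref (I.prefH h) r r')

/-- `M` is a strongly stable matching of `I`. -/
def IsStronglyStable (I : HRRC R H) (M : Finset (R × H)) : Prop :=
  I.IsMatching M ∧ I.FeasibleCaps M ∧ ∀ r h, ¬ I.IsSBP M r h

end HRRC

/-- Residents of the instance `I'`: for each variable `xᵢ` a resident `y'ᵢ`, and for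
each clause `Cⱼ` residents `g'_{j,1}` and `g'_{j,3}`. -/
inductive Res10 (n m : ℕ) where
  | y (i : Fin n)
  | g1 (j : Fin m)
  | g3 (j : Fin m)
deriving DecidableEq

/-- Hospitals of the instance `I'`: for each variable `xᵢ` a hospital `x'ᵢ`, and for
each clause `Cⱼ` hospitals `g'_{j,2}` and `g'_{j,4}`. -/
inductive Hos10 (n m : ℕ) where
  | x (i : Fin n)
  | g2 (j : Fin m)
  | g4 (j : Fin m)
deriving DecidableEq

/-- The HRRC instance `I'` built from a One-In-Three Positive 3-SAT instance with
variables `x₀, …, x_{n-1}` and clauses `C₀, …, C_{m-1}`, where the `ℓ`-th (positive)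
literal of clause `Cⱼ` is the variable `x_{C j ℓ}`.  All hospitals have capacity 1.
Preference lists: `y'ᵢ: (x'ᵢ)`; `g'_{j,1}: (g'_{j,2}, g'_{j,4})`;
`g'_{j,3}: (g'_{j,4}, g'_{j,2})`; `x'ᵢ: (y'ᵢ)`; `g'_{j,2}: (g'_{j,3}, g'_{j,1})`;
`g'_{j,4}: (g'_{j,1}, g'_{j,3})`.  For each clause `Cⱼ`, every 2-element subset of
`{g'_{j,2}, g'_{j,4}, x'_{C j 0}, x'_{C j 1}, x'_{C j 2}}` is a region with
regional cap 1. -/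
def oneInThreeInstance {n m : ℕ} (C : Fin m → Fin 3 → Fin n) :
    HRRC (Res10 n m) (Hos10 n m) where
  prefR := fun r => match r with
    | .y i => [.x i]
    | .g1 j => [.g2 j, .g4 j]
    | .g3 j => [.g4 j, .g2 j]
  prefH := fun h => match h with
    | .x i => [.y i]
    | .g2 j => [.g3 j, .g1 j]
    | .g4 j => [.g1 j, .g3 j]
  q := fun _ => 1
  regions := { E | ∃ j : Fin m,
    E ⊆ {Hos10.g2 j, Hos10.g4 j, Hos10.x (C j 0), Hos10.x (C j 1), Hos10.x (C j 2)} ∧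
    E.card = 2 }
  cap := fun _ => 1

section helpers
variable {R H : Type*} [DecidableEq R] [DecidableEq H]

lemma mem_assignedTo {M : Finset (R × H)} {r : R} {h : H} :
    r ∈ HRRC.assignedTo M h ↔ (r, h) ∈ M := by
  simp only [HRRC.assignedTo, Finset.mem_image, Finset.mem_filter, Prod.exists]
  constructor
  · rintro ⟨a, b, ⟨hab, rfl⟩, rfl⟩; exact hab
  · intro hm; exact ⟨r, h, ⟨hm, rfl⟩, rfl⟩

lemma mem_assignedIn {M : Finset (R × H)} {r : R} {E : Finset H} :
    r ∈ HRRC.assignedIn M E ↔ ∃ h ∈ E, (r, h) ∈ M := by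
  simp only [HRRC.assignedIn, Finset.mem_image, Finset.mem_filter, Prod.exists]
  constructor
  · rintro ⟨a, b, ⟨hab, hb⟩, rfl⟩; exact ⟨b, hb, hab⟩
  · rintro ⟨h', hh', hm⟩; exact ⟨r, h', ⟨hm, hh'⟩, rfl⟩

lemma mem_move {M : Finset (R × H)} {r : R} {h : H} {p : R × H} :
    p ∈ HRRC.move M r h ↔ (p ∈ M ∧ p.1 ≠ r) ∨ p = (r, h) := by
  simp [HRRC.move, Finset.mem_union, Finset.mem_filter]
  tauto

lemma same_hospital {I : HRRC R H} {M : Finset (R × H)} (hM : I.IsMatching M)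
    (hq : I.q = fun _ => 1) {r r' : R} {h : H} (h1 : (r, h) ∈ M) (h2 : (r', h) ∈ M) :
    r = r' := by
  have hc := hM.2.2 h
  rw [hq] at hc
  exact Finset.card_le_one.mp hc r (mem_assignedTo.mpr h1) r' (mem_assignedTo.mpr h2)

end helpers
section inst
variable {n m : ℕ} {C : Fin m → Fin 3 → Fin n}

def fiveSet (C : Fin m → Fin 3 → Fin n) (j : Fin m) : Finset (Hos10 n m) :=
  {Hos10.g2 j, Hos10.g4 j, Hos10.x (C j 0), Hos10.x (C j 1), Hos10.x (C j 2)}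

lemma regions_eq :
    (oneInThreeInstance C).regions = { E | ∃ j, E ⊆ fiveSet C j ∧ E.card = 2 } := rfl

lemma mk_region {h h' : Hos10 n m} (j : Fin m) (hh : h ∈ fiveSet C j)
    (hh' : h' ∈ fiveSet C j) (hne : h ≠ h') :
    ({h, h'} : Finset (Hos10 n m)) ∈ (oneInThreeInstance C).regions := by
  refine ⟨j, ?_, Finset.card_pair hne⟩
  rw [Finset.insert_subset_iff, Finset.singleton_subset_iff]
  exact ⟨hh, hh'⟩

lemma x_mem_fiveSet (j : Fin m) (ℓ : Fin 3) : Hos10.x (C j ℓ) ∈ fiveSet C j := by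
  fin_cases ℓ <;> simp [fiveSet]

lemma no_two {M : Finset (Res10 n m × Hos10 n m)}
    (hM : (oneInThreeInstance C).IsMatching M)
    (hF : (oneInThreeInstance C).FeasibleCaps M) {h h' : Hos10 n m}
    {r r' : Res10 n m}
    (hE : ({h, h'} : Finset (Hos10 n m)) ∈ (oneInThreeInstance C).regions)
    (h1 : (r, h) ∈ M) (h2 : (r', h') ∈ M) (hne : h ≠ h') : False := by
  have hrr : r ≠ r' := fun e => hne (hM.2.1 r h h' h1 (e ▸ h2))
  have hc : (HRRC.assignedIn M {h, h'}).card ≤ 1 := hF _ hE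
  have hsub : ({r, r'} : Finset (Res10 n m)) ⊆ HRRC.assignedIn M {h, h'} := by
    intro x hx
    rcases Finset.mem_insert.mp hx with rfl | hx
    · exact mem_assignedIn.mpr ⟨h, by simp, h1⟩
    · rw [Finset.mem_singleton] at hx; subst hx
      exact mem_assignedIn.mpr ⟨h', by simp, h2⟩
  have := Finset.card_le_card hsub
  rw [Finset.card_pair hrr] at this
  omega

lemma shape_x {M : Finset (Res10 n m × Hos10 n m)}
    (hM : (oneInThreeInstance C).IsMatching M) {r : Res10 n m} {i : Fin n}
    (hm : (r, Hos10.x i) ∈ M) : r = Res10.y i := by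
  have := (hM.1 _ hm).2
  simpa [oneInThreeInstance] using this

lemma shape_g2 {M : Finset (Res10 n m × Hos10 n m)}
    (hM : (oneInThreeInstance C).IsMatching M) {r : Res10 n m} {j : Fin m}
    (hm : (r, Hos10.g2 j) ∈ M) : r = Res10.g3 j ∨ r = Res10.g1 j := by
  have := (hM.1 _ hm).2
  simpa [oneInThreeInstance] using this

lemma shape_g4 {M : Finset (Res10 n m × Hos10 n m)}
    (hM : (oneInThreeInstance C).IsMatching M) {r : Res10 n m} {j : Fin m}
    (hm : (r, Hos10.g4 j) ∈ M) : r = Res10.g1 j ∨ r = Res10.g3 j := by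
  have := (hM.1 _ hm).2
  simpa [oneInThreeInstance] using this

lemma shape_y {M : Finset (Res10 n m × Hos10 n m)}
    (hM : (oneInThreeInstance C).IsMatching M) {h : Hos10 n m} {i : Fin n}
    (hm : (Res10.y i, h) ∈ M) : h = Hos10.x i := by
  have := (hM.1 _ hm).1
  simpa [oneInThreeInstance] using this

lemma shape_g1 {M : Finset (Res10 n m × Hos10 n m)}
    (hM : (oneInThreeInstance C).IsMatching M) {h : Hos10 n m} {j : Fin m}
    (hm : (Res10.g1 j, h) ∈ M) : h = Hos10.g2 j ∨ h = Hos10.g4 j := by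
  have := (hM.1 _ hm).1
  simpa [oneInThreeInstance] using this

lemma shape_g3 {M : Finset (Res10 n m × Hos10 n m)}
    (hM : (oneInThreeInstance C).IsMatching M) {h : Hos10 n m} {j : Fin m}
    (hm : (Res10.g3 j, h) ∈ M) : h = Hos10.g4 j ∨ h = Hos10.g2 j := by
  have := (hM.1 _ hm).1
  simpa [oneInThreeInstance] using this

example (j : Fin m) : ListPref [Hos10.g4 (n := n) j, Hos10.g2 j] (Hos10.g4 j) (Hos10.g2 j) := by
  simp [ListPref]

end inst
section inst2
variable {n m : ℕ} {C : Fin m → Fin 3 → Fin n}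

lemma move_feasible_gen {M : Finset (Res10 n m × Hos10 n m)}
    (hM : (oneInThreeInstance C).IsMatching M)
    (hF : (oneInThreeInstance C).FeasibleCaps M) {j : Fin m}
    {r0 : Res10 n m} {h0 h1 : Hos10 n m}
    (hg : (r0, h0) ∈ M) (hh0 : h0 ∈ fiveSet C j)
    (hh1 : ∀ j', h1 ∈ fiveSet C j' → j' = j) :
    (oneInThreeInstance C).FeasibleCaps (HRRC.move M r0 h1) := by
  intro E hE
  obtain ⟨j', hsub, hc2⟩ := hE
  by_cases hmem : h1 ∈ E
  · have hj : j' = j := hh1 j' (hsub hmem)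
    subst hj
    have hone : ∀ r' ∈ HRRC.assignedIn (HRRC.move M r0 h1) E, r' = r0 := by
      intro r' hr'
      obtain ⟨h', hh'E, hp⟩ := mem_assignedIn.mp hr'
      rcases mem_move.mp hp with ⟨hpM, hner⟩ | heq
      · exfalso
        have hh'5 : h' ∈ fiveSet C j' := hsub hh'E
        by_cases he : h' = h0
        · subst he
          exact hner (same_hospital hM rfl hpM hg)
        · exact no_two hM hF (mk_region j' hh0 hh'5 (fun e => he e.symm)) hg hpM
            (fun e => he e.symm)
      · exact congrArg Prod.fst heq
    show _ ≤ 1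
    exact Finset.card_le_one.mpr fun x hx y hy => (hone x hx).trans (hone y hy).symm
  · have hsub2 : HRRC.assignedIn (HRRC.move M r0 h1) E ⊆ HRRC.assignedIn M E := by
      intro r hr
      obtain ⟨h', hh'E, hp⟩ := mem_assignedIn.mp hr
      rcases mem_move.mp hp with ⟨hpM, _⟩ | heq
      · exact mem_assignedIn.mpr ⟨h', hh'E, hpM⟩
      · have : h' = h1 := congrArg Prod.snd heq
        exact absurd (this ▸ hh'E) hmem
    exact le_trans (Finset.card_le_card hsub2) (hF E ⟨j', hsub, hc2⟩)

lemma g2_only (j j' : Fin m) (h : Hos10.g2 (n := n) j ∈ fiveSet C j') : j' = j := by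
  simp only [fiveSet, Finset.mem_insert, Finset.mem_singleton] at h
  rcases h with h | h | h | h | h <;> first | (cases h; rfl) | exact absurd h (by simp)

lemma g4_only (j j' : Fin m) (h : Hos10.g4 (n := n) j ∈ fiveSet C j') : j' = j := by
  simp only [fiveSet, Finset.mem_insert, Finset.mem_singleton] at h
  rcases h with h | h | h | h | h <;> first | (cases h; rfl) | exact absurd h (by simp)

end inst2
section fwd
variable {n m : ℕ} {C : Fin m → Fin 3 → Fin n}

lemma forward_lemma {M : Finset (Res10 n m × Hos10 n m)}
    (hS : (oneInThreeInstance C).IsStronglyStable M)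
    (hC : ∀ j, Function.Injective (C j)) (j : Fin m) :
    ∃! ℓ : Fin 3, (Res10.y (C j ℓ), Hos10.x (C j ℓ)) ∈ M := by
  obtain ⟨hM, hF, hns⟩ := hS
  have hg2 : ∀ r, (r, Hos10.g2 j) ∉ M := by
    intro r hr
    rcases shape_g2 hM hr with rfl | rfl
    · refine hns (Res10.g3 j) (Hos10.g4 j) ⟨⟨?_, ?_, ?_, ?_⟩, ?_⟩
      · intro hmem
        exact (by simp : Hos10.g4 j ≠ Hos10.g2 j) (hM.2.1 _ _ _ hmem hr)
      · exact ⟨by simp [oneInThreeInstance], by simp [oneInThreeInstance]⟩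
      · exact Or.inr ⟨Hos10.g2 j, hr, by simp [ListPref, oneInThreeInstance]⟩
      · left
        have he : HRRC.assignedTo M (Hos10.g4 j) = ∅ := by
          rw [Finset.eq_empty_iff_forall_notMem]
          intro r' hr'
          exact no_two hM hF
            (mk_region j (by simp [fiveSet]) (by simp [fiveSet]) (by simp))
            hr (mem_assignedTo.mp hr') (by simp)
        rw [he]
        simp [oneInThreeInstance]
      · exact Or.inl (move_feasible_gen hM hF hr (by simp [fiveSet]) (g4_only j))
    · refine hns (Res10.g3 j) (Hos10.g2 j) ⟨⟨?_, ?_, ?_, ?_⟩, ?_⟩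
      · intro hmem
        exact (by simp : Res10.g3 j ≠ Res10.g1 j) (same_hospital hM rfl hmem hr)
      · exact ⟨by simp [oneInThreeInstance], by simp [oneInThreeInstance]⟩
      · left
        intro h' hmem
        rcases shape_g3 hM hmem with rfl | rfl
        · exact no_two hM hF
            (mk_region j (by simp [fiveSet]) (by simp [fiveSet]) (by simp))
            hr hmem (by simp)
        · exact (by simp : Res10.g3 j ≠ Res10.g1 j) (same_hospital hM rfl hmem hr)
      · exact Or.inr ⟨Res10.g1 j, mem_assignedTo.mpr hr,
          by simp [ListPref, oneInThreeInstance]⟩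
      · exact Or.inr ⟨Res10.g1 j, mem_assignedTo.mpr hr,
          by simp [ListPref, oneInThreeInstance]⟩
  have hg4 : ∀ r, (r, Hos10.g4 j) ∉ M := by
    intro r hr
    rcases shape_g4 hM hr with rfl | rfl
    · refine hns (Res10.g1 j) (Hos10.g2 j) ⟨⟨?_, ?_, ?_, ?_⟩, ?_⟩
      · intro hmem
        exact (by simp : Hos10.g2 j ≠ Hos10.g4 j) (hM.2.1 _ _ _ hmem hr)
      · exact ⟨by simp [oneInThreeInstance], by simp [oneInThreeInstance]⟩
      · exact Or.inr ⟨Hos10.g4 j, hr, by simp [ListPref, oneInThreeInstance]⟩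
      · left
        have he : HRRC.assignedTo M (Hos10.g2 j) = ∅ := by
          rw [Finset.eq_empty_iff_forall_notMem]
          intro r' hr'
          exact no_two hM hF
            (mk_region j (by simp [fiveSet]) (by simp [fiveSet]) (by simp))
            hr (mem_assignedTo.mp hr') (by simp)
        rw [he]
        simp [oneInThreeInstance]
      · exact Or.inl (move_feasible_gen hM hF hr (by simp [fiveSet]) (g2_only j))
    · refine hns (Res10.g1 j) (Hos10.g4 j) ⟨⟨?_, ?_, ?_, ?_⟩, ?_⟩
      · intro hmem
        exact (by simp : Res10.g1 j ≠ Res10.g3 j) (same_hospital hM rfl hmem hr)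
      · exact ⟨by simp [oneInThreeInstance], by simp [oneInThreeInstance]⟩
      · left
        intro h' hmem
        rcases shape_g1 hM hmem with rfl | rfl
        · exact no_two hM hF
            (mk_region j (by simp [fiveSet]) (by simp [fiveSet]) (by simp))
            hr hmem (by simp)
        · exact (by simp : Res10.g1 j ≠ Res10.g3 j) (same_hospital hM rfl hmem hr)
      · exact Or.inr ⟨Res10.g3 j, mem_assignedTo.mpr hr,
          by simp [ListPref, oneInThreeInstance]⟩
      · exact Or.inr ⟨Res10.g3 j, mem_assignedTo.mpr hr,
          by simp [ListPref, oneInThreeInstance]⟩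
  have hg1un : ∀ h, (Res10.g1 j, h) ∉ M := by
    intro h hm
    rcases shape_g1 hM hm with rfl | rfl
    · exact hg2 _ hm
    · exact hg4 _ hm
  have huniq : ∀ ℓ ℓ' : Fin 3, (Res10.y (C j ℓ), Hos10.x (C j ℓ)) ∈ M →
      (Res10.y (C j ℓ'), Hos10.x (C j ℓ')) ∈ M → ℓ = ℓ' := by
    intro ℓ ℓ' h1 h2
    by_contra hll
    have hii : C j ℓ ≠ C j ℓ' := fun e => hll (hC j e)
    exact no_two hM hF
      (mk_region j (x_mem_fiveSet j ℓ) (x_mem_fiveSet j ℓ') (by simpa using hii))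
      h1 h2 (by simpa using hii)
  have getl : ∀ r h, (r, h) ∈ M → h ∈ fiveSet C j →
      ∃ ℓ : Fin 3, (Res10.y (C j ℓ), Hos10.x (C j ℓ)) ∈ M := by
    intro r h hm hh5
    simp only [fiveSet, Finset.mem_insert, Finset.mem_singleton] at hh5
    rcases hh5 with rfl | rfl | rfl | rfl | rfl
    · exact absurd hm (hg2 r)
    · exact absurd hm (hg4 r)
    · have hr := shape_x hM hm; subst hr; exact ⟨0, hm⟩
    · have hr := shape_x hM hm; subst hr; exact ⟨1, hm⟩
    · have hr := shape_x hM hm; subst hr; exact ⟨2, hm⟩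
  have hbp : (oneInThreeInstance C).IsBlockingPair M (Res10.g1 j) (Hos10.g2 j) := by
    refine ⟨hg2 _, ⟨by simp [oneInThreeInstance], by simp [oneInThreeInstance]⟩,
      Or.inl (fun h' => hg1un h'), Or.inl ?_⟩
    have he : HRRC.assignedTo M (Hos10.g2 j) = ∅ := by
      rw [Finset.eq_empty_iff_forall_notMem]
      intro r' hr'
      exact hg2 r' (mem_assignedTo.mp hr')
    rw [he]
    simp [oneInThreeInstance]
  have hnf : ¬ (oneInThreeInstance C).FeasibleCaps
      (HRRC.move M (Res10.g1 j) (Hos10.g2 j)) := by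
    intro hfeas
    exact hns _ _ ⟨hbp, Or.inl hfeas⟩
  simp only [HRRC.FeasibleCaps, not_forall] at hnf
  obtain ⟨E, hE, hcard⟩ := hnf
  obtain ⟨j', hsub, hc2⟩ := hE
  have h2lt : 1 < (HRRC.assignedIn (HRRC.move M (Res10.g1 j) (Hos10.g2 j)) E).card := by
    have : ¬ (HRRC.assignedIn (HRRC.move M (Res10.g1 j) (Hos10.g2 j)) E).card ≤ 1 := hcard
    omega
  obtain ⟨r₁, hr₁, r₂, hr₂, hne⟩ := Finset.one_lt_card.mp h2lt
  obtain ⟨h₁, hh₁, hp₁⟩ := mem_assignedIn.mp hr₁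
  obtain ⟨h₂, hh₂, hp₂⟩ := mem_assignedIn.mp hr₂
  have hboth : ¬ ((r₁, h₁) ∈ M ∧ (r₂, h₂) ∈ M) := by
    rintro ⟨hm₁, hm₂⟩
    have hFE : (HRRC.assignedIn M E).card ≤ 1 := hF E ⟨j', hsub, hc2⟩
    have hsub2 : ({r₁, r₂} : Finset (Res10 n m)) ⊆ HRRC.assignedIn M E := by
      intro x hx
      rcases Finset.mem_insert.mp hx with rfl | hx
      · exact mem_assignedIn.mpr ⟨h₁, hh₁, hm₁⟩
      · rw [Finset.mem_singleton] at hx; subst hx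
        exact mem_assignedIn.mpr ⟨h₂, hh₂, hm₂⟩
    have := Finset.card_le_card hsub2
    rw [Finset.card_pair hne] at this
    omega
  have hex : ∃ ℓ : Fin 3, (Res10.y (C j ℓ), Hos10.x (C j ℓ)) ∈ M := by
    rcases mem_move.mp hp₁ with ⟨hm₁, _⟩ | he₁
    · rcases mem_move.mp hp₂ with ⟨hm₂, _⟩ | he₂
      · exact absurd ⟨hm₁, hm₂⟩ hboth
      · have hh2 : h₂ = Hos10.g2 j := congrArg Prod.snd he₂
        have hj : j' = j := g2_only j j' (hsub (hh2 ▸ hh₂))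
        subst hj
        exact getl r₁ h₁ hm₁ (hsub hh₁)
    · have hh1 : h₁ = Hos10.g2 j := congrArg Prod.snd he₁
      have hj : j' = j := g2_only j j' (hsub (hh1 ▸ hh₁))
      rcases mem_move.mp hp₂ with ⟨hm₂, _⟩ | he₂
      · subst hj
        exact getl r₂ h₂ hm₂ (hsub hh₂)
      · exact absurd ((congrArg Prod.fst he₁).trans (congrArg Prod.fst he₂).symm) hne
  obtain ⟨ℓ, hl⟩ := hex
  exact ⟨ℓ, hl, fun ℓ' hl' => huniq ℓ' ℓ hl' hl⟩

end fwd
section bwd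
variable {n m : ℕ} {C : Fin m → Fin 3 → Fin n}

lemma backward_lemma {a : Fin n → Bool}
    (ha : ∀ j : Fin m, ∃! ℓ : Fin 3, a (C j ℓ) = true) :
    ∃ M : Finset (Res10 n m × Hos10 n m),
      (oneInThreeInstance C).IsStronglyStable M := by
  classical
  set M : Finset (Res10 n m × Hos10 n m) :=
    (Finset.univ.filter fun i : Fin n => a i = true ∨ ∀ j ℓ, C j ℓ ≠ i).image
      (fun i => (Res10.y i, Hos10.x i)) with hMdef
  have hmem : ∀ p : Res10 n m × Hos10 n m,
      p ∈ M ↔ ∃ i, (a i = true ∨ ∀ j ℓ, C j ℓ ≠ i) ∧ p = (Res10.y i, Hos10.x i) := by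
    intro p
    constructor
    · intro hp
      obtain ⟨i, hi, he⟩ := Finset.mem_image.mp hp
      exact ⟨i, (Finset.mem_filter.mp hi).2, he.symm⟩
    · rintro ⟨i, hi, rfl⟩
      exact Finset.mem_image.mpr ⟨i, Finset.mem_filter.mpr ⟨Finset.mem_univ i, hi⟩, rfl⟩
  have hdec : ∀ (j : Fin m) (t : Fin n), Hos10.x t ∈ fiveSet C j →
      ∃ ℓ : Fin 3, t = C j ℓ := by
    intro j t ht
    simp only [fiveSet, Finset.mem_insert, Finset.mem_singleton] at ht
    rcases ht with ht | ht | ht | ht | ht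
    · exact absurd ht (by simp)
    · exact absurd ht (by simp)
    · exact ⟨0, by simpa using ht⟩
    · exact ⟨1, by simpa using ht⟩
    · exact ⟨2, by simpa using ht⟩
  have hMatch : (oneInThreeInstance C).IsMatching M := by
    refine ⟨?_, ?_, ?_⟩
    · intro p hp
      obtain ⟨i, _, rfl⟩ := (hmem p).mp hp
      exact ⟨by simp [oneInThreeInstance], by simp [oneInThreeInstance]⟩
    · intro r h h' h1 h2
      obtain ⟨i, _, he⟩ := (hmem _).mp h1
      obtain ⟨i', _, he'⟩ := (hmem _).mp h2
      rw [Prod.mk.injEq] at he he'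
      have hii : i = i' := by
        have := he.1.symm.trans he'.1
        simpa using this
      subst hii
      rw [he.2, he'.2]
    · intro h
      show _ ≤ 1
      apply Finset.card_le_one.mpr
      intro x hx y hy
      obtain ⟨i, _, he⟩ := (hmem _).mp (mem_assignedTo.mp hx)
      obtain ⟨i', _, he'⟩ := (hmem _).mp (mem_assignedTo.mp hy)
      rw [Prod.mk.injEq] at he he'
      have hii : i = i' := by
        have := he.2.symm.trans he'.2
        simpa using this
      subst hii
      rw [he.1, he'.1]
  have hFeas : (oneInThreeInstance C).FeasibleCaps M := by
    intro E hE
    obtain ⟨j, hsub, _⟩ := hE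
    show _ ≤ 1
    apply Finset.card_le_one.mpr
    intro r₁ hr1 r₂ hr2
    obtain ⟨hA, hAE, hmA⟩ := mem_assignedIn.mp hr1
    obtain ⟨hB, hBE, hmB⟩ := mem_assignedIn.mp hr2
    obtain ⟨i, hPi, heA⟩ := (hmem _).mp hmA
    obtain ⟨i', hPi', heB⟩ := (hmem _).mp hmB
    rw [Prod.mk.injEq] at heA heB
    have hxA : Hos10.x i ∈ fiveSet C j := heA.2 ▸ hsub hAE
    have hxB : Hos10.x i' ∈ fiveSet C j := heB.2 ▸ hsub hBE
    obtain ⟨ℓ, rfl⟩ := hdec j i hxA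
    obtain ⟨ℓ', rfl⟩ := hdec j i' hxB
    have haℓ : a (C j ℓ) = true := by
      rcases hPi with h | h
      · exact h
      · exact absurd rfl (h j ℓ)
    have haℓ' : a (C j ℓ') = true := by
      rcases hPi' with h | h
      · exact h
      · exact absurd rfl (h j ℓ')
    obtain ⟨ℓ0, _, hu⟩ := ha j
    have : ℓ = ℓ' := (hu ℓ haℓ).trans (hu ℓ' haℓ').symm
    subst this
    rw [heA.1, heB.1]
  have key : ∀ (r : Res10 n m) (h : Hos10 n m) (t : Fin n),
      (Res10.y t, Hos10.x t) ∈ M → r ≠ Res10.y t →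
      ({h, Hos10.x t} : Finset (Hos10 n m)) ∈ (oneInThreeInstance C).regions →
      ¬ (oneInThreeInstance C).FeasibleCaps (HRRC.move M r h) := by
    intro r h t hm hner hreg hFm
    have hc : (HRRC.assignedIn (HRRC.move M r h) {h, Hos10.x t}).card ≤ 1 := hFm _ hreg
    have h1 : r ∈ HRRC.assignedIn (HRRC.move M r h) {h, Hos10.x t} :=
      mem_assignedIn.mpr ⟨h, by simp, mem_move.mpr (Or.inr rfl)⟩
    have h2 : Res10.y t ∈ HRRC.assignedIn (HRRC.move M r h) {h, Hos10.x t} :=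
      mem_assignedIn.mpr ⟨Hos10.x t, by simp,
        mem_move.mpr (Or.inl ⟨hm, fun e => hner e.symm⟩)⟩
    have hsub2 : ({r, Res10.y t} : Finset (Res10 n m)) ⊆
        HRRC.assignedIn (HRRC.move M r h) {h, Hos10.x t} := by
      intro x hx
      rcases Finset.mem_insert.mp hx with rfl | hx
      · exact h1
      · rw [Finset.mem_singleton] at hx; subst hx; exact h2
    have := Finset.card_le_card hsub2
    rw [Finset.card_pair hner] at this
    omega
  refine ⟨M, hMatch, hFeas, ?_⟩
  intro r h hsbp
  obtain ⟨⟨hnm, ⟨haccR, haccH⟩, _, _⟩, hstrong⟩ := hsbp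
  cases r with
  | y i =>
    have hxi : h = Hos10.x i := by simpa [oneInThreeInstance] using haccR
    subst hxi
    have hPn : ¬ (a i = true ∨ ∀ j ℓ, C j ℓ ≠ i) := fun hPi =>
      hnm ((hmem _).mpr ⟨i, hPi, rfl⟩)
    push_neg at hPn
    obtain ⟨hai, j, ℓ, hjl⟩ := hPn
    obtain ⟨ℓ', hl', _⟩ := ha j
    have hne' : C j ℓ' ≠ i := fun e => hai (e ▸ hl')
    have hmem' : (Res10.y (C j ℓ'), Hos10.x (C j ℓ')) ∈ M :=
      (hmem _).mpr ⟨_, Or.inl hl', rfl⟩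
    rcases hstrong with hfeas | ⟨r', hr', _⟩
    · exact key _ _ _ hmem' (by simpa using Ne.symm hne')
        (mk_region j (hjl ▸ x_mem_fiveSet j ℓ) (x_mem_fiveSet j ℓ')
          (by simpa using Ne.symm hne')) hfeas
    · have hmm' := mem_assignedTo.mp hr'
      obtain ⟨i'', _, he''⟩ := (hmem _).mp hmm'
      rw [Prod.mk.injEq] at he''
      have hii : i'' = i := by
        have := he''.2
        simpa using this.symm
      subst hii
      rw [he''.1] at hmm'
      exact hnm hmm'
  | g1 j =>
    have hh : h = Hos10.g2 j ∨ h = Hos10.g4 j := by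
      simpa [oneInThreeInstance] using haccR
    obtain ⟨ℓ', hl', _⟩ := ha j
    have hmem' : (Res10.y (C j ℓ'), Hos10.x (C j ℓ')) ∈ M :=
      (hmem _).mpr ⟨_, Or.inl hl', rfl⟩
    rcases hstrong with hfeas | ⟨r', hr', _⟩
    · refine key _ _ _ hmem' (by simp)
        (mk_region j ?_ (x_mem_fiveSet j ℓ') ?_) hfeas
      · rcases hh with rfl | rfl <;> simp [fiveSet]
      · rcases hh with rfl | rfl <;> simp
    · obtain ⟨i'', _, he''⟩ := (hmem _).mp (mem_assignedTo.mp hr')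
      rw [Prod.mk.injEq] at he''
      rcases hh with rfl | rfl <;> simpa using he''.2
  | g3 j =>
    have hh : h = Hos10.g4 j ∨ h = Hos10.g2 j := by
      simpa [oneInThreeInstance] using haccR
    obtain ⟨ℓ', hl', _⟩ := ha j
    have hmem' : (Res10.y (C j ℓ'), Hos10.x (C j ℓ')) ∈ M :=
      (hmem _).mpr ⟨_, Or.inl hl', rfl⟩
    rcases hstrong with hfeas | ⟨r', hr', _⟩
    · refine key _ _ _ hmem' (by simp)
        (mk_region j ?_ (x_mem_fiveSet j ℓ') ?_) hfeas
      · rcases hh with rfl | rfl <;> simp [fiveSet]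
      · rcases hh with rfl | rfl <;> simp
    · obtain ⟨i'', _, he''⟩ := (hmem _).mp (mem_assignedTo.mp hr')
      rw [Prod.mk.injEq] at he''
      rcases hh with rfl | rfl <;> simpa using he''.2

end bwd
/-- `I'` admits a strongly stable matching iff the One-In-Three Positive 3-SAT
instance has a truth assignment making exactly one literal true in each clause. -/
theorem oneInThree_reduction_correct {n m : ℕ}
    (C : Fin m → Fin 3 → Fin n) (hC : ∀ j, Function.Injective (C j)) :
    (∃ M : Finset (Res10 n m × Hos10 n m), (oneInThreeInstance C).IsStronglyStable M) ↔
    (∃ a : Fin n → Bool, ∀ j : Fin m, ∃! ℓ : Fin 3, a (C j ℓ) = true) := by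
  constructor
  · rintro ⟨M, hS⟩
    classical
    refine ⟨fun i => decide ((Res10.y i, Hos10.x i) ∈ M), fun j => ?_⟩
    obtain ⟨ℓ, hl, hu⟩ := forward_lemma hS hC j
    exact ⟨ℓ, by simpa using hl, fun ℓ' hl' => hu ℓ' (by simpa using hl')⟩
  · rintro ⟨a, ha⟩
    exact backward_lemma ha
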